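/- arXiv:2509.18583 — 7 statements merged into one kernel-verified Lean document; each statement's English description precedes it below -/
import Mathlib

section
/- Let A and B be Hermitian d×d complex matrices and let r be a real number. Then ‖exp(−i r B) · exp(−i r A) − exp(−i r (A + B))‖ ≤ (r²/2) · ‖B·A − A·B‖. -/
open scoped Matrix.Norms.L2Operator

namespace TrotterAux
open NormedSpace
open scoped Matrix

variable {d : ℕ}

noncomputable instance instRatMat : NormedAlgebra ℚ (Matrix (Fin d) (Fin d) ℂ) :=
  NormedAlgebra.restrictScalars ℚ ℂ _

lemma smul_aux (z : ℂ) (X : Matrix (Fin d) (Fin d) ℂ) (s : ℝ) :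
    s • (z • X) = (z * s) • X := by
  rw [← Complex.coe_smul, smul_smul, mul_comm]

lemma hasDerivAt_E (z : ℂ) (X : Matrix (Fin d) (Fin d) ℂ) (t : ℝ) :
    HasDerivAt (fun s : ℝ => exp ((z * s) • X)) (exp ((z * t) • X) * (z • X)) t := by
  have h := hasDerivAt_exp_smul_const (𝕂 := ℝ) (z • X) t
  simp only [smul_aux] at h
  exact h

lemma cont_E (z : ℂ) (X : Matrix (Fin d) (Fin d) ℂ) :
    Continuous fun s : ℝ => exp ((z * s) • X) :=
  exp_continuous.comp ((continuous_const.mul Complex.continuous_ofReal).smul continuous_const)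

lemma star_exp_smul {X : Matrix (Fin d) (Fin d) ℂ} (hX : X.IsHermitian) (c : ℂ) :
    star (exp (c • X)) = exp ((starRingEnd ℂ c) • X) := by
  rw [Matrix.star_eq_conjTranspose, ← Matrix.exp_conjTranspose, Matrix.conjTranspose_smul, hX]
  rfl

lemma exp_neg_mul_exp (Y : Matrix (Fin d) (Fin d) ℂ) : exp (-Y) * exp Y = 1 := by
  rw [← NormedSpace.exp_add_of_commute ((Commute.refl Y).neg_left), neg_add_cancel, exp_zero]

lemma exp_mul_exp_neg (Y : Matrix (Fin d) (Fin d) ℂ) : exp Y * exp (-Y) = 1 := by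
  rw [← NormedSpace.exp_add_of_commute ((Commute.refl Y).neg_right), add_neg_cancel, exp_zero]

lemma norm_unitary_mul (u X : Matrix (Fin d) (Fin d) ℂ) (h : star u * u = 1) :
    ‖u * X‖ = ‖X‖ := by
  have h1 : ‖u * X‖ * ‖u * X‖ = ‖X‖ * ‖X‖ := by
    rw [← CStarRing.norm_star_mul_self (x := u * X), star_mul, mul_assoc, ← mul_assoc (star u),
      h, one_mul, CStarRing.norm_star_mul_self]
  exact (mul_self_inj (norm_nonneg _) (norm_nonneg _)).mp h1

lemma norm_mul_unitary (X u : Matrix (Fin d) (Fin d) ℂ) (h : u * star u = 1) :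
    ‖X * u‖ = ‖X‖ := by
  rw [show X * u = (star u * star X)ᴴ by simp [Matrix.star_eq_conjTranspose],
    Matrix.l2_opNorm_conjTranspose,
    norm_unitary_mul _ _ (by rw [star_star, h]),
    ← Matrix.l2_opNorm_conjTranspose (A := star X)]
  simp [Matrix.star_eq_conjTranspose]

lemma key_unit {X : Matrix (Fin d) (Fin d) ℂ} (hX : X.IsHermitian) (t : ℝ) :
    star (exp ((Complex.I * t) • X)) = exp ((-Complex.I * t) • X) := by
  rw [star_exp_smul hX]
  congr 1
  simp [Complex.ext_iff]

lemma key_unit' {X : Matrix (Fin d) (Fin d) ℂ} (hX : X.IsHermitian) (t : ℝ) :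
    star (exp ((-Complex.I * t) • X)) = exp ((Complex.I * t) • X) := by
  rw [star_exp_smul hX]
  congr 1
  simp [Complex.ext_iff]

lemma E_neg_eq (z : ℂ) (X : Matrix (Fin d) (Fin d) ℂ) (t : ℝ) :
    exp ((-z * t) • X) = exp (-((z * t) • X)) := by
  rw [neg_mul, neg_smul]

lemma mul_E (z : ℂ) {X : Matrix (Fin d) (Fin d) ℂ} (t : ℝ) :
    Commute X (exp ((z * t) • X)) :=
  Commute.exp_right (((Commute.refl X).smul_right _))

lemma EP_mul_EM {Y : Matrix (Fin d) (Fin d) ℂ} (t : ℝ) :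
    exp ((Complex.I * t) • Y) * exp ((-Complex.I * t) • Y) = 1 := by
  rw [E_neg_eq]; exact exp_mul_exp_neg _

lemma EM_mul_EP {Y : Matrix (Fin d) (Fin d) ℂ} (t : ℝ) :
    exp ((-Complex.I * t) • Y) * exp ((Complex.I * t) • Y) = 1 := by
  rw [E_neg_eq]; exact exp_neg_mul_exp _

lemma alg1 (em ep X Y : Matrix (Fin d) (Fin d) ℂ)
    (hc : ep * (Complex.I • Y) = (Complex.I • Y) * ep) :
    em * (Complex.I • (X * Y - Y * X)) * ep =
      em * (-Complex.I • Y) * X * ep + em * X * (ep * (Complex.I • Y)) := by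
  rw [hc]
  simp only [smul_sub, mul_sub, sub_mul, smul_mul_assoc, mul_smul_comm, neg_smul, neg_mul,
    mul_neg, mul_assoc]
  abel

lemma comm_bound {X Y : Matrix (Fin d) (Fin d) ℂ} (hY : Y.IsHermitian) (s : ℝ) :
    ‖exp ((-Complex.I * s) • Y) * X - X * exp ((-Complex.I * s) • Y)‖ ≤
      |s| * ‖Y * X - X * Y‖ := by
  set Em : ℝ → Matrix (Fin d) (Fin d) ℂ := fun t => exp ((-Complex.I * t) • Y) with hEm
  set Ep : ℝ → Matrix (Fin d) (Fin d) ℂ := fun t => exp ((Complex.I * t) • Y) with hEp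
  set Φ : ℝ → Matrix (Fin d) (Fin d) ℂ :=
    fun t => Em t * (Complex.I • (X * Y - Y * X)) * Ep t with hΦ
  have hderiv : ∀ t : ℝ, HasDerivAt (fun t => Em t * X * Ep t) (Φ t) t := by
    intro t
    have h2 := ((hasDerivAt_E (-Complex.I) Y t).mul_const X).mul (hasDerivAt_E Complex.I Y t)
    refine h2.congr_deriv ?_
    exact (alg1 (Em t) (Ep t) X Y ((mul_E Complex.I (X := Y) t).smul_left Complex.I).eq.symm).symm
  have hcont : Continuous Φ :=
    (((cont_E (-Complex.I) Y).mul continuous_const).mul (cont_E Complex.I Y))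
  have hftc : ∫ t in (0:ℝ)..s, Φ t = Em s * X * Ep s - X := by
    rw [intervalIntegral.integral_eq_sub_of_hasDerivAt (fun t _ => hderiv t)
      (hcont.intervalIntegrable 0 s)]
    simp [hEm, hEp, exp_zero]
  have hnorm : ∀ t : ℝ, ‖Φ t‖ = ‖X * Y - Y * X‖ := by
    intro t
    rw [hΦ]
    rw [norm_mul_unitary _ (Ep t) (by rw [key_unit hY]; exact EP_mul_EM t),
      norm_unitary_mul (Em t) _ (by rw [key_unit' hY]; exact EP_mul_EM t),
      norm_smul, Complex.norm_I, one_mul]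
  have hb : ‖Em s * X * Ep s - X‖ ≤ ‖X * Y - Y * X‖ * |s| := by
    rw [← hftc]
    have := intervalIntegral.norm_integral_le_of_norm_le_const
      (C := ‖X * Y - Y * X‖) (f := Φ) (a := 0) (b := s)
      (fun t _ => le_of_eq (hnorm t))
    simpa using this
  have hkey : Em s * X - X * Em s = (Em s * X * Ep s - X) * Em s := by
    rw [sub_mul, mul_assoc (Em s * X), EP_mul_EM s, mul_one]
  rw [show exp ((-Complex.I * s) • Y) = Em s from rfl, hkey,
    norm_mul_unitary _ (Em s) (by rw [key_unit' hY]; exact EM_mul_EP s),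
    (neg_sub (X * Y) (Y * X)).symm, norm_neg]
  rw [mul_comm] at hb
  exact hb

lemma alg2 (f g k A B : Matrix (Fin d) (Fin d) ℂ)
    (hBg : B * g = g * B) (hAk : A * k = k * A) :
    ((f * (Complex.I • (A + B))) * g + f * (g * (-Complex.I • B))) * k
        + (f * g) * (k * (-Complex.I • A))
      = Complex.I • (f * (A * g - g * A) * k) := by
  simp only [smul_add, add_mul, mul_add, smul_sub, mul_sub, sub_mul, smul_mul_assoc,
    mul_smul_comm, neg_smul, neg_mul, mul_neg, mul_assoc]
  rw [show B * (g * k) = g * (B * k) by rw [← mul_assoc, hBg, mul_assoc], ← hAk]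
  abel

theorem main {d : ℕ} (A B : Matrix (Fin d) (Fin d) ℂ)
    (hA : A.IsHermitian) (hB : B.IsHermitian) (r : ℝ) :
    ‖exp ((-(Complex.I * r)) • B) * exp ((-(Complex.I * r)) • A) -
        exp ((-(Complex.I * r)) • (A + B))‖ ≤
      r ^ 2 / 2 * ‖B * A - A * B‖ := by
  simp only [← neg_mul]
  have hP : (A + B).IsHermitian := hA.add hB
  set C : ℝ := ‖B * A - A * B‖ with hC
  have hC0 : 0 ≤ C := norm_nonneg _
  set f : ℝ → Matrix (Fin d) (Fin d) ℂ := fun t => exp ((Complex.I * t) • (A + B)) with hf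
  set g : ℝ → Matrix (Fin d) (Fin d) ℂ := fun t => exp ((-Complex.I * t) • B) with hg
  set k : ℝ → Matrix (Fin d) (Fin d) ℂ := fun t => exp ((-Complex.I * t) • A) with hk
  set K : ℝ → Matrix (Fin d) (Fin d) ℂ := fun t => f t * g t * k t with hK
  set Ψ : ℝ → Matrix (Fin d) (Fin d) ℂ :=
    fun t => Complex.I • (f t * (A * g t - g t * A) * k t) with hΨ
  have hderiv : ∀ t : ℝ, HasDerivAt K (Ψ t) t := by
    intro t
    have h2 := (((hasDerivAt_E Complex.I (A + B) t).mul (hasDerivAt_E (-Complex.I) B t)).mul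
      (hasDerivAt_E (-Complex.I) A t))
    refine h2.congr_deriv ?_
    exact (alg2 (f t) (g t) (k t) A B
      ((mul_E (-Complex.I) (X := B) t).eq) ((mul_E (-Complex.I) (X := A) t).eq))
  have hcont : Continuous Ψ := by
    refine Continuous.const_smul (g := fun t => f t * (A * g t - g t * A) * k t) ?_ Complex.I
    exact ((cont_E Complex.I (A + B)).mul
      ((continuous_const.mul (cont_E (-Complex.I) B)).sub
        ((cont_E (-Complex.I) B).mul continuous_const))).mul (cont_E (-Complex.I) A)
  have hK0 : K 0 = 1 := by
    simp [hK, hf, hg, hk, Complex.ofReal_zero, mul_zero, zero_smul, exp_zero]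
  have hftc : ∫ t in (0:ℝ)..r, Ψ t = K r - 1 := by
    rw [intervalIntegral.integral_eq_sub_of_hasDerivAt (fun t _ => hderiv t)
      (hcont.intervalIntegrable 0 r), hK0]
  have hbound : ∀ t : ℝ, ‖Ψ t‖ ≤ |t| * C := by
    intro t
    have h1 : ‖Ψ t‖ = ‖A * g t - g t * A‖ := by
      rw [hΨ, norm_smul, Complex.norm_I, one_mul,
        norm_mul_unitary _ (k t) (by rw [key_unit' hA]; exact EM_mul_EP t),
        norm_unitary_mul (f t) _ (by rw [key_unit hP]; exact EM_mul_EP t)]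
    rw [h1, norm_sub_rev]
    exact comm_bound hB t
  have habs : |∫ t in (0:ℝ)..r, |t| * C| = r ^ 2 / 2 * C := by
    have h2 : ∫ t in (0:ℝ)..r, |t| * C = r * |r| / 2 * C := by
      rw [intervalIntegral.integral_mul_const]
      congr 1
      rcases le_total 0 r with h | h
      · rw [intervalIntegral.integral_congr (g := fun x : ℝ => x)
          (fun x hx => abs_of_nonneg (by
            rw [Set.uIcc_of_le h] at hx; exact hx.1)),
          integral_id, abs_of_nonneg h]
        ring
      · rw [intervalIntegral.integral_congr (g := fun x : ℝ => -x)
          (fun x hx => abs_of_nonpos (by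
            rw [Set.uIcc_of_ge h] at hx; exact hx.2)),
          intervalIntegral.integral_neg, integral_id, abs_of_nonpos h]
        ring
    rw [h2, abs_mul, abs_div, abs_mul, abs_abs, abs_two, abs_of_nonneg hC0, ← pow_two, sq_abs]
  have hKb : ‖K r - 1‖ ≤ r ^ 2 / 2 * C := by
    rw [← hftc, ← habs]
    refine intervalIntegral.norm_integral_le_abs_of_norm_le ?_ ?_
    · exact MeasureTheory.ae_of_all _ fun t => hbound t
    · exact (continuous_abs.mul continuous_const).intervalIntegrable 0 r
  have hfin : g r * k r - exp ((-Complex.I * r) • (A + B)) =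
      exp ((-Complex.I * r) • (A + B)) * (K r - 1) := by
    rw [mul_sub, mul_one, hK]
    rw [show exp ((-Complex.I * ↑r) • (A + B)) * (f r * g r * k r) = g r * k r by
      rw [← mul_assoc, ← mul_assoc, EM_mul_EP r, one_mul]]
  rw [hfin, norm_unitary_mul _ _ (by rw [key_unit' hP]; exact EP_mul_EM r)]
  exact hKb

end TrotterAux

/-- **Two-term Trotter commutator bound.**
For Hermitian `d × d` complex matrices `A` and `B` and a real time `r`, the ℓ²
operator-norm distance between `exp (-i r B) * exp (-i r A)` and `exp (-i r (A + B))`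
is at most `(r² / 2) * ‖B * A - A * B‖`. -/
theorem trotter_two_term_bound {d : ℕ} (A B : Matrix (Fin d) (Fin d) ℂ)
    (hA : A.IsHermitian) (hB : B.IsHermitian) (r : ℝ) :
    ‖NormedSpace.exp ((-(Complex.I * r)) • B) * NormedSpace.exp ((-(Complex.I * r)) • A) -
        NormedSpace.exp ((-(Complex.I * r)) • (A + B))‖ ≤
      r ^ 2 / 2 * ‖B * A - A * B‖ := by
  exact TrotterAux.main A B hA hB r
end

section
/- Let N ≥ 1 and m ≥ 1, let H_1, …, H_N be Hermitian d×d complex matrices and let r be a real number. Let U := exp(−i (r/m) H_N) ⋯ exp(−i (r/m) H_1). Then ‖U^m − exp(−i r (H_1 + ⋯ + H_N))‖ ≤ (r²/(2m)) · Σ_{k=1}^{N} ‖(Σ_{j=k+1}^{N} H_j)·H_k − H_k·(Σ_{j=k+1}^{N} H_j)‖. -/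
set_option maxHeartbeats 1000000

open scoped Matrix.Norms.L2Operator

namespace TrotterProofAux

open NormedSpace Matrix

variable {d : ℕ}

local notation "M" => Matrix (Fin d) (Fin d) ℂ

lemma norm_one_le : ‖(1 : M)‖ ≤ 1 := by
  have h := Matrix.l2_opNorm_conjTranspose_mul_self (1 : M)
  rw [Matrix.conjTranspose_one, mul_one] at h
  nlinarith [norm_nonneg (1 : M)]

lemma norm_exp_skew_le_one (A : M) (hA : Aᴴ = -A) : ‖exp A‖ ≤ 1 := by
  have h1 : (exp A)ᴴ * exp A = 1 := by
    rw [← Matrix.exp_conjTranspose, hA, ← Matrix.exp_add_of_commute _ _ (Commute.refl A).neg_left,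
      neg_add_cancel, exp_zero]
  have h2 := Matrix.l2_opNorm_conjTranspose_mul_self (exp A)
  rw [h1] at h2
  nlinarith [norm_nonneg (exp A), norm_one_le (d := d)]

lemma hasDerivAt_exp_real (A : M) (s : ℝ) :
    HasDerivAt (fun u : ℝ => exp (u • A)) (exp (s • A) * A) s := by
  have h := hasDerivAt_exp_smul_const (𝕂 := ℝ) A s
  exact h

lemma continuous_exp_real (A : M) : Continuous (fun u : ℝ => exp (u • A)) :=
  continuous_iff_continuousAt.2 fun s => (hasDerivAt_exp_real A s).continuousAt

lemma exp_comm_self (A : M) (u : ℝ) : exp (u • A) * A = A * exp (u • A) :=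
  (((Commute.refl A).smul_right u).exp_right).symm

lemma comm_exp_bound (A B : M) (hB : ∀ s : ℝ, ‖exp (s • B)‖ ≤ 1) (s : ℝ) :
    ‖exp (s • B) * A - A * exp (s • B)‖ ≤ |s| * ‖B * A - A * B‖ := by
  set K := ‖B * A - A * B‖ with hK
  have hg : ∀ u : ℝ, HasDerivAt (fun u : ℝ => exp (u • B) * A * exp ((s - u) • B))
      (exp (u • B) * (B * A - A * B) * exp ((s - u) • B)) u := by
    intro u
    have h1 := hasDerivAt_exp_real B u
    have h2 : HasDerivAt (fun u : ℝ => exp ((s - u) • B))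
        (-(exp ((s - u) • B) * B)) u := by
      have h3 := hasDerivAt_exp_real B (s - u)
      have h4 : HasDerivAt (fun u : ℝ => s - u) (-1 : ℝ) u := by
        simpa using (hasDerivAt_id u).const_sub s
      have h6 := h3.scomp u h4
      simp only [neg_smul, one_smul] at h6
      exact h6
    have h5 := (h1.mul_const A).mul h2
    convert h5 using 1
    · rfl
    · rfl
    · rfl
    · rfl
    rw [exp_comm_self B (s - u)]
    noncomm_ring
  have bound : ∀ u ∈ Set.univ, ‖exp (u • B) * (B * A - A * B) * exp ((s - u) • B)‖ ≤ K := by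
    intro u _
    calc ‖exp (u • B) * (B * A - A * B) * exp ((s - u) • B)‖
        ≤ ‖exp (u • B) * (B * A - A * B)‖ * ‖exp ((s - u) • B)‖ := norm_mul_le _ _
      _ ≤ ‖exp (u • B)‖ * K * ‖exp ((s - u) • B)‖ := by
          gcongr; exact norm_mul_le _ _
      _ ≤ 1 * K * 1 := by
          have h1 := hB u
          have h2 := hB (s - u)
          have h3 : (0:ℝ) ≤ K := norm_nonneg _
          have h4 : (0:ℝ) ≤ ‖exp ((s - u) • B)‖ := norm_nonneg _
          have h5 : (0:ℝ) ≤ ‖exp (u • B)‖ := norm_nonneg _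
          have hxK : ‖exp (u • B)‖ * K ≤ 1 * K := mul_le_mul_of_nonneg_right h1 h3
          exact mul_le_mul hxK h2 h4 (by linarith)
      _ = K := by ring
  have mvt := Convex.norm_image_sub_le_of_norm_hasDerivWithin_le
    (f := fun u : ℝ => exp (u • B) * A * exp ((s - u) • B))
    (f' := fun u : ℝ => exp (u • B) * (B * A - A * B) * exp ((s - u) • B))
    (fun u _ => (hg u).hasDerivWithinAt) bound convex_univ (Set.mem_univ 0) (Set.mem_univ s)
  simpa [sub_self, zero_smul, exp_zero, mul_comm K |s|] using mvt

lemma two_term_bound (A B : M)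
    (hB : ∀ s : ℝ, ‖exp (s • B)‖ ≤ 1)
    (hAd : ∀ s : ℝ, ‖exp (s • A)‖ ≤ 1)
    (hC : ∀ s : ℝ, ‖exp (s • (A + B))‖ ≤ 1) :
    ‖exp B * exp A - exp (A + B)‖ ≤ ‖B * A - A * B‖ / 2 := by
  set K := ‖B * A - A * B‖ with hK
  have hK0 : (0:ℝ) ≤ K := norm_nonneg _
  set f : ℝ → M := fun u => exp (u • (-(A + B))) * exp (u • B) * exp (u • A) with hf
  set f' : ℝ → M := fun u =>
    exp (u • (-(A + B))) * (exp (u • B) * A - A * exp (u • B)) * exp (u • A) with hf'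
  have hneg : ∀ s : ℝ, ‖exp (s • (-(A + B)))‖ ≤ 1 := by
    intro s
    rw [smul_neg, ← neg_smul]
    exact hC (-s)
  have hderiv : ∀ u : ℝ, HasDerivAt f (f' u) u := by
    intro u
    have h1 := hasDerivAt_exp_real (-(A + B)) u
    have h2 := hasDerivAt_exp_real B u
    have h3 := hasDerivAt_exp_real A u
    have h5 := (h1.mul h2).mul h3
    convert h5 using 1
    · rfl
    · rfl
    · rfl
    · rfl
    simp only [hf', Pi.mul_apply]
    rw [exp_comm_self B u, exp_comm_self A u]
    noncomm_ring
  have hcont' : Continuous f' :=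
    ((continuous_exp_real _).mul
      (((continuous_exp_real B).mul continuous_const).sub
        (continuous_const.mul (continuous_exp_real B)))).mul (continuous_exp_real A)
  have hftc : ∫ u in (0:ℝ)..1, f' u = f 1 - f 0 :=
    intervalIntegral.integral_eq_sub_of_hasDerivAt (fun u _ => hderiv u)
      (hcont'.intervalIntegrable 0 1)
  have hbound : ∀ u : ℝ, ‖f' u‖ ≤ |u| * K := by
    intro u
    have h := comm_exp_bound A B hB u
    have h4 : (0:ℝ) ≤ ‖exp (u • B) * A - A * exp (u • B)‖ := norm_nonneg _
    have e1 : ‖f' u‖ ≤ ‖exp (u • -(A + B))‖ * ‖exp (u • B) * A - A * exp (u • B)‖ *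
        ‖exp (u • A)‖ := by
      simp only [hf']
      exact le_trans (norm_mul_le _ _)
        (mul_le_mul_of_nonneg_right (norm_mul_le _ _) (norm_nonneg _))
    have h1 : ‖exp (u • -(A + B))‖ * ‖exp (u • B) * A - A * exp (u • B)‖
        ≤ 1 * (|u| * K) := mul_le_mul (hneg u) h h4 zero_le_one
    have h2 : ‖exp (u • -(A + B))‖ * ‖exp (u • B) * A - A * exp (u • B)‖ *
        ‖exp (u • A)‖ ≤ 1 * (|u| * K) * 1 :=
      mul_le_mul h1 (hAd u) (norm_nonneg _) (by positivity)
    calc ‖f' u‖ ≤ _ := e1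
      _ ≤ 1 * (|u| * K) * 1 := h2
      _ = |u| * K := by ring
  have hint : ‖f 1 - f 0‖ ≤ K / 2 := by
    rw [← hftc]
    have hb2 : ∀ᵐ t ∂MeasureTheory.volume.restrict (Set.uIoc (0:ℝ) 1), ‖f' t‖ ≤ |t| * K :=
      Filter.Eventually.of_forall fun t => hbound t
    have habs : IntervalIntegrable (fun u : ℝ => |u| * K) MeasureTheory.volume 0 1 :=
      ((continuous_abs.mul continuous_const).intervalIntegrable 0 1)
    refine le_trans (intervalIntegral.norm_integral_le_of_norm_le zero_le_one
      (Filter.Eventually.of_forall fun t _ => hbound t) habs) ?_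
    have hcongr : ∫ u in (0:ℝ)..1, |u| * K = ∫ u in (0:ℝ)..1, u * K := by
      apply intervalIntegral.integral_congr
      intro u hu
      rw [Set.uIcc_of_le (by norm_num : (0:ℝ) ≤ 1)] at hu
      simp [abs_of_nonneg hu.1]
    rw [hcongr, intervalIntegral.integral_mul_const, integral_id]
    norm_num
    linarith
  have hfin : exp B * exp A - exp (A + B) = exp (A + B) * (f 1 - f 0) := by
    have hinv : exp (A + B) * exp (-(A + B)) = 1 := by
      rw [← Matrix.exp_add_of_commute _ _ (Commute.refl (A + B)).neg_right, add_neg_cancel, exp_zero]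
    simp only [hf, one_smul, zero_smul, exp_zero, mul_one, one_mul]
    rw [mul_sub, mul_one, ← mul_assoc, ← mul_assoc, hinv, one_mul]
  rw [hfin]
  calc ‖exp (A + B) * (f 1 - f 0)‖ ≤ ‖exp (A + B)‖ * ‖f 1 - f 0‖ := norm_mul_le _ _
    _ ≤ 1 * (K / 2) := by
        refine mul_le_mul ?_ hint (norm_nonneg _) zero_le_one
        have := hC 1
        rwa [one_smul] at this
    _ = K / 2 := by ring

lemma herm_sum (s : Finset ℕ) (H : ℕ → M) (hH : ∀ k, (H k).IsHermitian) :
    (∑ j ∈ s, H j).IsHermitian := by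
  rw [Matrix.IsHermitian, Matrix.conjTranspose_sum]
  exact Finset.sum_congr rfl fun i _ => (hH i).eq

lemma exp_smul_herm_le_one (K : M) (hK : K.IsHermitian) (c : ℂ) (hcs : star c = -c) (s : ℝ) :
    ‖exp (s • (c • K))‖ ≤ 1 := by
  rw [← smul_assoc]
  apply norm_exp_skew_le_one
  rw [Matrix.conjTranspose_smul, hK.eq, star_smul, star_trivial, hcs, smul_neg, neg_smul]

lemma exp_herm_le_one (K : M) (hK : K.IsHermitian) (c : ℂ) (hcs : star c = -c) :
    ‖exp (c • K)‖ ≤ 1 := by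
  have := exp_smul_herm_le_one K hK c hcs 1
  rwa [one_smul] at this

lemma skew_coeff (t : ℝ) : star (-(Complex.I * (t:ℂ))) = -(-(Complex.I * (t:ℂ))) := by
  simp [Complex.star_def, _root_.map_mul, Complex.conj_I, Complex.conj_ofReal]

lemma norm_pow_le_one (U : M) (hU : ‖U‖ ≤ 1) : ∀ n : ℕ, ‖U ^ n‖ ≤ 1 := by
  intro n
  induction n with
  | zero => simpa using norm_one_le (d := d)
  | succ n ih =>
      rw [pow_succ]
      exact le_trans (norm_mul_le _ _) (mul_le_one₀ ih (norm_nonneg _) hU)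

lemma pow_diff_bound (U V : M) (hU : ‖U‖ ≤ 1) (hV : ‖V‖ ≤ 1) (m : ℕ) :
    ‖U ^ m - V ^ m‖ ≤ m * ‖U - V‖ := by
  induction m with
  | zero => simp
  | succ n ih =>
      have hUn := norm_pow_le_one U hU n
      have key : U ^ (n + 1) - V ^ (n + 1) = U ^ n * (U - V) + (U ^ n - V ^ n) * V := by
        rw [pow_succ, pow_succ]
        noncomm_ring
      rw [key]
      have h1 : ‖U ^ n * (U - V)‖ ≤ 1 * ‖U - V‖ :=
        le_trans (norm_mul_le _ _) (mul_le_mul_of_nonneg_right hUn (norm_nonneg _))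
      have h2 : ‖(U ^ n - V ^ n) * V‖ ≤ (n * ‖U - V‖) * 1 :=
        le_trans (norm_mul_le _ _)
          (mul_le_mul ih hV (norm_nonneg _) (by positivity))
      calc ‖U ^ n * (U - V) + (U ^ n - V ^ n) * V‖
          ≤ ‖U ^ n * (U - V)‖ + ‖(U ^ n - V ^ n) * V‖ := norm_add_le _ _
        _ ≤ 1 * ‖U - V‖ + (n * ‖U - V‖) * 1 := add_le_add h1 h2
        _ = (n + 1 : ℕ) * ‖U - V‖ := by push_cast; ring

lemma list_prod_norm_le_one : ∀ l : List M, (∀ x ∈ l, ‖x‖ ≤ 1) → ‖l.prod‖ ≤ 1 := by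
  intro l
  induction l with
  | nil => intro _; simpa using norm_one_le (d := d)
  | cons x l ih =>
      intro h
      rw [List.prod_cons]
      refine le_trans (norm_mul_le _ _) (mul_le_one₀ (h x (by simp)) (norm_nonneg _) ?_)
      exact ih fun y hy => h y (by simp [hy])

lemma range_succ_prod (N : ℕ) (f : ℕ → M) :
    ((List.range (N + 1)).reverse.map f).prod
      = ((List.range N).reverse.map (fun k => f (k + 1))).prod * f 0 := by
  rw [List.range_succ_eq_map]
  simp [List.reverse_cons, List.map_append, List.prod_append, List.map_reverse,
    List.map_map, Function.comp_def, Nat.succ_eq_add_one]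

lemma sum_Ioo_zero (N : ℕ) (H : ℕ → M) :
    ∑ j ∈ Finset.Ioo 0 (N + 1), H j = ∑ j ∈ Finset.range N, H (j + 1) := by
  rw [← Finset.Ico_add_one_left_eq_Ioo, Finset.sum_Ico_eq_sum_range]
  simp [add_comm]

lemma sum_Ioo_succ (k N : ℕ) (H : ℕ → M) :
    ∑ j ∈ Finset.Ioo (k + 1) (N + 1), H j = ∑ j ∈ Finset.Ioo k N, H (j + 1) := by
  rw [← Finset.map_add_right_Ioo k N 1, Finset.sum_map]
  rfl

lemma single_step : ∀ (N : ℕ) (H : ℕ → M), (∀ k, (H k).IsHermitian) → ∀ t : ℝ,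
    ‖((List.range N).reverse.map (fun k => exp ((-(Complex.I * (t:ℂ))) • H k))).prod -
      exp ((-(Complex.I * (t:ℂ))) • ∑ k ∈ Finset.range N, H k)‖ ≤
    t ^ 2 / 2 * ∑ k ∈ Finset.range N,
      ‖(∑ j ∈ Finset.Ioo k N, H j) * H k - H k * ∑ j ∈ Finset.Ioo k N, H j‖ := by
  intro N
  induction N with
  | zero => intro H hH t; simp [exp_zero]
  | succ N ih =>
    intro H hH t
    set c : ℂ := -(Complex.I * (t:ℂ)) with hc
    have hcs : star c = -c := skew_coeff t
    set T : M := ∑ k ∈ Finset.range N, H (k + 1) with hT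
    have hTh : T.IsHermitian := herm_sum _ _ (fun k => hH (k + 1))
    have hkey := range_succ_prod N (fun k => exp (c • H k))
    set Q : M := ((List.range N).reverse.map (fun k => exp (c • H (k + 1)))).prod with hQ
    have hsum : ∑ k ∈ Finset.range (N + 1), H k = H 0 + T := by
      rw [Finset.sum_range_succ']; exact add_comm _ _
    have hdec : Q * exp (c • H 0) - exp (c • (H 0 + T))
        = (Q - exp (c • T)) * exp (c • H 0)
          + (exp (c • T) * exp (c • H 0) - exp (c • H 0 + c • T)) := by
      rw [smul_add]; noncomm_ring
    have h2 := two_term_bound (c • H 0) (c • T)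
      (fun s => exp_smul_herm_le_one T hTh c hcs s)
      (fun s => exp_smul_herm_le_one (H 0) (hH 0) c hcs s)
      (fun s => by
        rw [← smul_add]
        exact exp_smul_herm_le_one (H 0 + T) ((hH 0).add hTh) c hcs s)
    have hcomm : (c • T) * (c • H 0) - (c • H 0) * (c • T)
        = (c * c) • (T * H 0 - H 0 * T) := by
      simp [smul_mul_assoc, mul_smul_comm, smul_smul, smul_sub]
    have hnc : ‖c * c‖ = t ^ 2 := by
      rw [norm_mul, hc]
      simp only [norm_neg, norm_mul, Complex.norm_I, Complex.norm_real, one_mul]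
      rw [Real.norm_eq_abs, ← abs_mul, abs_mul_self, sq]
    have ihQ := ih (fun k => H (k + 1)) (fun k => hH (k + 1)) t
    rw [← hc, ← hT, ← hQ] at ihQ
    have b1 : ‖(Q - exp (c • T)) * exp (c • H 0)‖
        ≤ t ^ 2 / 2 * ∑ k ∈ Finset.range N,
          ‖(∑ j ∈ Finset.Ioo k N, H (j + 1)) * H (k + 1)
            - H (k + 1) * ∑ j ∈ Finset.Ioo k N, H (j + 1)‖ := by
      refine le_trans (norm_mul_le _ _) ?_
      have := mul_le_mul ihQ (exp_herm_le_one (H 0) (hH 0) c hcs) (norm_nonneg _)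
        (by positivity)
      simpa using this
    have b2 : ‖exp (c • T) * exp (c • H 0) - exp (c • H 0 + c • T)‖
        ≤ t ^ 2 / 2 * ‖T * H 0 - H 0 * T‖ := by
      refine le_trans h2 ?_
      rw [hcomm, norm_smul, hnc]
      exact le_of_eq (by ring)
    have e0 : ∀ k, ∑ j ∈ Finset.Ioo (k + 1) (N + 1), H j
        = ∑ j ∈ Finset.Ioo k N, H (j + 1) := fun k => sum_Ioo_succ k N H
    have e1 : ∑ j ∈ Finset.Ioo 0 (N + 1), H j = T := sum_Ioo_zero N H
    rw [hkey, hsum, Finset.sum_range_succ']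
    simp only [e0, e1]
    rw [hdec]
    refine le_trans (norm_add_le _ _) (le_trans (add_le_add b1 b2) (le_of_eq (by ring)))

end TrotterProofAux


open TrotterProofAux NormedSpace

/-- **Correctness of `m`-step first-order Trotterization.**
For `N ≥ 1` Hermitian `d × d` complex matrices `H 0, …, H (N-1)` (representing
`H_1, …, H_N`), `m ≥ 1` steps and a real time `r`, let
`U = exp (-i (r/m) H_N) ⋯ exp (-i (r/m) H_1)`.  Then
`‖U ^ m - exp (-i r (H_1 + ⋯ + H_N))‖` is at most
`(r² / (2 m)) * Σ_{k=1}^{N} ‖(Σ_{j=k+1}^{N} H_j) * H_k - H_k * (Σ_{j=k+1}^{N} H_j)‖`. -/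
theorem trotterization_repeated_error_bound {d N m : ℕ} (hN : 1 ≤ N) (hm : 1 ≤ m)
    (H : ℕ → Matrix (Fin d) (Fin d) ℂ) (hH : ∀ k, (H k).IsHermitian) (r : ℝ) :
    ‖(((List.range N).reverse.map
            (fun k => NormedSpace.exp ((-(Complex.I * (r / m))) • H k))).prod) ^ m -
        NormedSpace.exp ((-(Complex.I * r)) • ∑ k ∈ Finset.range N, H k)‖ ≤
      r ^ 2 / (2 * m) * ∑ k ∈ Finset.range N,
        ‖(∑ j ∈ Finset.Ioo k N, H j) * H k - H k * ∑ j ∈ Finset.Ioo k N, H j‖ := by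
  have hm0 : (m:ℝ) ≠ 0 := by
    have : 0 < m := hm
    positivity
  have hmC : (m:ℂ) ≠ 0 := by exact_mod_cast hm0
  set t : ℝ := r / m with ht
  have hcast : (-(Complex.I * ((r:ℂ) / (m:ℂ)))) = -(Complex.I * (t:ℂ)) := by
    rw [ht]
    push_cast
    ring
  simp only [hcast]
  set c : ℂ := -(Complex.I * (t:ℂ)) with hc
  set S : Matrix (Fin d) (Fin d) ℂ := ∑ k ∈ Finset.range N, H k with hS
  have hSh : S.IsHermitian := herm_sum _ _ hH
  have hV : exp ((-(Complex.I * (r:ℂ))) • S) = (exp (c • S)) ^ m := by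
    rw [← Matrix.exp_nsmul, ← Nat.cast_smul_eq_nsmul ℂ, smul_smul]
    have hsc : ((m:ℂ)) * c = -(Complex.I * (r:ℝ)) := by
      rw [hc, ht]
      push_cast
      field_simp
    rw [hsc]
  set U : Matrix (Fin d) (Fin d) ℂ :=
    ((List.range N).reverse.map (fun k => exp (c • H k))).prod with hU
  have hU1 : ‖U‖ ≤ 1 := by
    refine list_prod_norm_le_one _ ?_
    intro x hx
    simp only [List.mem_map] at hx
    obtain ⟨k, -, rfl⟩ := hx
    exact exp_herm_le_one _ (hH k) c (skew_coeff t)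
  have hV1 : ‖exp (c • S)‖ ≤ 1 := exp_herm_le_one _ hSh c (skew_coeff t)
  have hP := pow_diff_bound U (exp (c • S)) hU1 hV1 m
  have hss := single_step N H hH t
  rw [← hc, ← hS, ← hU] at hss
  rw [hV]
  refine le_trans hP (le_trans (mul_le_mul_of_nonneg_left hss (by positivity)) ?_)
  apply le_of_eq
  rw [ht]
  field_simp
end

section
/- Let A and B be d×d complex matrices. Then the sequence m ↦ (exp(A/m) · exp(B/m))^m converges, as m → ∞, to exp(A + B). -/
open scoped Matrix.Norms.L2Operator

section aux
variable {𝔸 : Type*} [NormedRing 𝔸] [NormOneClass 𝔸] [NormedAlgebra ℂ 𝔸] [CompleteSpace 𝔸]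

lemma my_norm_exp_le (x : 𝔸) : ‖NormedSpace.exp x‖ ≤ Real.exp ‖x‖ := by
  rw [NormedSpace.exp_eq_tsum ℂ]
  have hR : Real.exp ‖x‖ = ∑' n : ℕ, ‖x‖ ^ n / n.factorial := by
    rw [Real.exp_eq_exp_ℝ, NormedSpace.exp_eq_tsum_div]
  have hb : ∀ n : ℕ, ‖((n.factorial : ℂ))⁻¹ • x ^ n‖ ≤ ‖x‖ ^ n / n.factorial := by
    intro n
    rw [norm_smul, norm_inv, Complex.norm_natCast, div_eq_inv_mul]
    exact mul_le_mul_of_nonneg_left (norm_pow_le x n) (by positivity)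
  rw [hR]
  refine (norm_tsum_le_tsum_norm (NormedSpace.norm_expSeries_summable' x)).trans ?_
  exact Summable.tsum_le_tsum hb (NormedSpace.norm_expSeries_summable' x)
    (Real.summable_pow_div_factorial ‖x‖)

lemma my_norm_exp_sub_le (x : 𝔸) :
    ‖NormedSpace.exp x - 1 - x‖ ≤ ‖x‖ ^ 2 * Real.exp ‖x‖ := by
  have hsum := NormedSpace.expSeries_summable' (𝕂 := ℂ) x
  have key : NormedSpace.exp x - 1 - x
      = ∑' n : ℕ, (((n + 2).factorial : ℂ))⁻¹ • x ^ (n + 2) := by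
    have h2 := Summable.sum_add_tsum_nat_add 2 hsum
    rw [NormedSpace.exp_eq_tsum ℂ]
    beta_reduce
    rw [← h2]
    simp [Finset.sum_range_succ]
    abel
  rw [key]
  have hb : ∀ n : ℕ, ‖(((n + 2).factorial : ℂ))⁻¹ • x ^ (n + 2)‖
      ≤ ‖x‖ ^ 2 * (‖x‖ ^ n / n.factorial) := by
    intro n
    rw [norm_smul, norm_inv, Complex.norm_natCast]
    calc ((((n+2).factorial : ℝ))⁻¹) * ‖x ^ (n+2)‖
        ≤ ((n.factorial : ℝ))⁻¹ * ‖x‖ ^ (n + 2) := by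
          refine mul_le_mul ?_ (norm_pow_le x (n+2)) (norm_nonneg _) (by positivity)
          apply inv_anti₀ (by positivity)
          exact_mod_cast Nat.factorial_le (by omega)
      _ = ‖x‖ ^ 2 * (‖x‖ ^ n / n.factorial) := by ring
  have hs1 : Summable fun n : ℕ => ‖(((n + 2).factorial : ℂ))⁻¹ • x ^ (n + 2)‖ :=
    (summable_nat_add_iff 2).2 (NormedSpace.norm_expSeries_summable' x)
  have hs2 : Summable fun n : ℕ => ‖x‖ ^ 2 * (‖x‖ ^ n / n.factorial) :=
    (Real.summable_pow_div_factorial ‖x‖).mul_left _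
  refine (norm_tsum_le_tsum_norm hs1).trans ?_
  refine (Summable.tsum_le_tsum hb hs1 hs2).trans_eq ?_
  rw [tsum_mul_left, Real.exp_eq_exp_ℝ, NormedSpace.exp_eq_tsum_div]

lemma my_norm_pow_sub_pow_le (T S : 𝔸) (M : ℝ) (hT : ‖T‖ ≤ M) (hS : ‖S‖ ≤ M)
    (hM : 1 ≤ M) (m : ℕ) : ‖T ^ m - S ^ m‖ ≤ m * M ^ m * ‖T - S‖ := by
  have hM0 : 0 ≤ M := le_trans zero_le_one hM
  induction m with
  | zero => simp
  | succ k ih =>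
    have hTk : ‖T ^ k‖ ≤ M ^ k := (norm_pow_le T k).trans (pow_le_pow_left₀ (norm_nonneg _) hT k)
    have hid : T ^ (k + 1) - S ^ (k + 1) = T ^ k * (T - S) + (T ^ k - S ^ k) * S := by
      noncomm_ring
    calc ‖T ^ (k + 1) - S ^ (k + 1)‖
        ≤ ‖T ^ k * (T - S)‖ + ‖(T ^ k - S ^ k) * S‖ := by rw [hid]; exact norm_add_le _ _
      _ ≤ ‖T ^ k‖ * ‖T - S‖ + ‖T ^ k - S ^ k‖ * ‖S‖ :=
          add_le_add (norm_mul_le _ _) (norm_mul_le _ _)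
      _ ≤ M ^ k * ‖T - S‖ + (k * M ^ k * ‖T - S‖) * M := by
          gcongr
      _ = M ^ k * ‖T - S‖ + k * M ^ (k + 1) * ‖T - S‖ := by ring
      _ ≤ M ^ (k + 1) * ‖T - S‖ + k * M ^ (k + 1) * ‖T - S‖ := by
          refine add_le_add_left (mul_le_mul_of_nonneg_right ?_ (norm_nonneg _)) _
          exact pow_le_pow_right₀ hM (Nat.le_succ k)
      _ = (k + 1 : ℕ) * M ^ (k + 1) * ‖T - S‖ := by push_cast; ring

lemma my_trotter_bound (A B : 𝔸) (m : ℕ) (hm : 1 ≤ m) :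
    ‖(NormedSpace.exp (((m : ℂ))⁻¹ • A) * NormedSpace.exp (((m : ℂ))⁻¹ • B)) ^ m -
      NormedSpace.exp (A + B)‖ ≤
    Real.exp (‖A‖ + ‖B‖) *
      (Real.exp (‖A‖ + ‖B‖) + 1 + (‖A‖ + ‖B‖) * Real.exp (‖A‖ + ‖B‖) +
        Real.exp (‖A‖ + ‖B‖) ^ 2 + Real.exp (‖A‖ + ‖B‖)) * (‖A‖ + ‖B‖) ^ 2 / m := by
  set a : ℝ := ‖A‖ with ha
  set b : ℝ := ‖B‖ with hb
  have ha0 : (0:ℝ) ≤ a := norm_nonneg A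
  have hb0 : (0:ℝ) ≤ b := norm_nonneg B
  have hab : (0:ℝ) ≤ a + b := by linarith
  set E : ℝ := Real.exp (a + b) with hE
  have hE1 : (1:ℝ) ≤ E := Real.one_le_exp hab
  have hE0 : (0:ℝ) ≤ E := zero_le_one.trans hE1
  set C : ℝ := E + 1 + (a + b) * E + E ^ 2 + E with hC
  have hC0 : (0:ℝ) ≤ C := by positivity
  have hm0 : (0:ℝ) < m := by exact_mod_cast hm
  have hmC : (m : ℂ) ≠ 0 := by exact_mod_cast hm0.ne'
  set x := ((m : ℂ))⁻¹ • A with hx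
  set y := ((m : ℂ))⁻¹ • B with hy
  have hnormc : ‖((m : ℂ))⁻¹‖ = (m : ℝ)⁻¹ := by
    rw [norm_inv, Complex.norm_natCast]
  have hxn : ‖x‖ = a / m := by rw [hx, norm_smul, hnormc, inv_mul_eq_div]
  have hyn : ‖y‖ = b / m := by rw [hy, norm_smul, hnormc, inv_mul_eq_div]
  set s : ℝ := (a + b) / m with hs
  have hs0 : (0:ℝ) ≤ s := by positivity
  have hxys : ‖x‖ + ‖y‖ = s := by rw [hxn, hyn, hs]; ring
  have hxle : ‖x‖ ≤ s := by
    rw [hxn, hs]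
    gcongr
    linarith
  have hyle : ‖y‖ ≤ s := by
    rw [hyn, hs]
    gcongr
    linarith
  have hsle : s ≤ a + b := by
    rw [hs]; exact div_le_self hab (by exact_mod_cast hm)
  have hesE : Real.exp s ≤ E := Real.exp_le_exp.2 hsle
  set T := NormedSpace.exp x * NormedSpace.exp y with hT
  set S := NormedSpace.exp (x + y) with hSdef
  have hSm : S ^ m = NormedSpace.exp (A + B) := by
    haveI : NormedAlgebra ℚ 𝔸 := NormedAlgebra.restrictScalars ℚ ℂ 𝔸
    rw [hSdef, ← NormedSpace.exp_nsmul]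
    congr 1
    rw [hx, hy, ← smul_add, ← Nat.cast_smul_eq_nsmul ℂ, smul_smul,
      mul_inv_cancel₀ hmC, one_smul]
  have hTle : ‖T‖ ≤ Real.exp s := by
    calc ‖T‖ ≤ ‖NormedSpace.exp x‖ * ‖NormedSpace.exp y‖ := norm_mul_le _ _
      _ ≤ Real.exp ‖x‖ * Real.exp ‖y‖ :=
          mul_le_mul (my_norm_exp_le x) (my_norm_exp_le y) (norm_nonneg _)
            (Real.exp_nonneg _)
      _ = Real.exp s := by rw [← Real.exp_add, hxys]
  have hSle : ‖S‖ ≤ Real.exp s := by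
    refine (my_norm_exp_le _).trans ?_
    exact Real.exp_le_exp.2 ((norm_add_le x y).trans_eq hxys)
  set p := NormedSpace.exp x - 1 - x with hp
  set q := NormedSpace.exp y - 1 - y with hq
  set r := NormedSpace.exp (x + y) - 1 - (x + y) with hr
  have hpb : ‖p‖ ≤ s ^ 2 * E := by
    refine (my_norm_exp_sub_le x).trans ?_
    have := Real.exp_le_exp.2 (hxle.trans hsle)
    gcongr
  have hqb : ‖q‖ ≤ s ^ 2 * E := by
    refine (my_norm_exp_sub_le y).trans ?_
    have := Real.exp_le_exp.2 (hyle.trans hsle)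
    gcongr
  have hrb : ‖r‖ ≤ s ^ 2 * E := by
    refine (my_norm_exp_sub_le (x + y)).trans ?_
    have h1 : ‖x + y‖ ≤ s := (norm_add_le x y).trans_eq hxys
    have := Real.exp_le_exp.2 (h1.trans hsle)
    gcongr
  have hexpx : NormedSpace.exp x = 1 + x + p := by rw [hp]; abel
  have hexpy : NormedSpace.exp y = 1 + y + q := by rw [hq]; abel
  have hexpxy : NormedSpace.exp (x + y) = 1 + (x + y) + r := by rw [hr]; abel
  have hid : T - S = q + x * y + x * q + p * (1 + y + q) - r := by
    rw [hT, hSdef, hexpxy, hexpx, hexpy]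
    noncomm_ring
  have hTSb : ‖T - S‖ ≤ C * s ^ 2 := by
    rw [hid]
    have h1 : ‖x * y‖ ≤ s ^ 2 := by
      refine (norm_mul_le x y).trans ?_
      rw [sq]
      exact mul_le_mul hxle hyle (norm_nonneg _) hs0
    have h2 : ‖x * q‖ ≤ (a + b) * (s ^ 2 * E) := by
      refine (norm_mul_le x q).trans ?_
      exact mul_le_mul (hxle.trans hsle) hqb (norm_nonneg _) hab
    have h3 : ‖p * (1 + y + q)‖ ≤ s ^ 2 * E * E := by
      rw [← hexpy]
      refine (norm_mul_le _ _).trans ?_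
      refine mul_le_mul hpb ((my_norm_exp_le y).trans ?_) (norm_nonneg _) (by positivity)
      exact (Real.exp_le_exp.2 (hyle.trans hsle))
    calc ‖q + x * y + x * q + p * (1 + y + q) - r‖
        ≤ ‖q + x * y + x * q + p * (1 + y + q)‖ + ‖r‖ := norm_sub_le _ _
      _ ≤ ‖q + x * y + x * q‖ + ‖p * (1 + y + q)‖ + ‖r‖ := by
          gcongr; exact norm_add_le _ _
      _ ≤ (‖q + x * y‖ + ‖x * q‖) + ‖p * (1 + y + q)‖ + ‖r‖ := by
          gcongr; exact norm_add_le _ _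
      _ ≤ (‖q‖ + ‖x * y‖ + ‖x * q‖) + ‖p * (1 + y + q)‖ + ‖r‖ := by
          gcongr; exact norm_add_le _ _
      _ ≤ (s ^ 2 * E + s ^ 2 + (a + b) * (s ^ 2 * E)) + s ^ 2 * E * E + s ^ 2 * E := by
          gcongr
      _ = C * s ^ 2 := by rw [hC]; ring
  have hM1 : (1:ℝ) ≤ Real.exp s := Real.one_le_exp hs0
  have hMm : (Real.exp s) ^ m = E := by
    rw [hE, ← Real.exp_nat_mul, hs, mul_div_cancel₀]
    exact hm0.ne'
  have hmain := my_norm_pow_sub_pow_le T S (Real.exp s) hTle hSle hM1 m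
  rw [hMm, hSm] at hmain
  refine hmain.trans ?_
  have hs2 : s ^ 2 = (a + b) ^ 2 / m ^ 2 := by rw [hs]; ring
  calc (m : ℝ) * E * ‖T - S‖ ≤ (m:ℝ) * E * (C * s ^ 2) := by gcongr
    _ = E * C * (a + b) ^ 2 / m := by rw [hs2]; field_simp

end aux

open scoped Matrix.Norms.L2Operator

/-- **Lie–Trotter product formula.**
For `d × d` complex matrices `A` and `B`, the sequence
`m ↦ (exp (A / m) * exp (B / m)) ^ m` converges (in the ℓ² operator norm,
equivalently any norm on the finite-dimensional matrix space) to `exp (A + B)`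
as `m → ∞`. -/
theorem lie_trotter_product_formula {d : ℕ} (A B : Matrix (Fin d) (Fin d) ℂ) :
    Filter.Tendsto
      (fun m : ℕ =>
        ‖(NormedSpace.exp (((m : ℂ))⁻¹ • A) * NormedSpace.exp (((m : ℂ))⁻¹ • B)) ^ m -
          NormedSpace.exp (A + B)‖)
      Filter.atTop (nhds 0) := by
  rcases Nat.eq_zero_or_pos d with hd | hd
  · subst hd
    have hz : ∀ m : ℕ,
        ‖(NormedSpace.exp (((m : ℂ))⁻¹ • A) * NormedSpace.exp (((m : ℂ))⁻¹ • B)) ^ m -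
          NormedSpace.exp (A + B)‖ = 0 := fun m => by
      rw [Subsingleton.elim ((NormedSpace.exp (((m : ℂ))⁻¹ • A) *
        NormedSpace.exp (((m : ℂ))⁻¹ • B)) ^ m - NormedSpace.exp (A + B)) 0, norm_zero]
    simp only [hz]
    exact tendsto_const_nhds
  · haveI : Nonempty (Fin d) := ⟨⟨0, hd⟩⟩
    refine squeeze_zero' (Filter.Eventually.of_forall fun m => norm_nonneg _) ?_
      (tendsto_const_div_atTop_nhds_zero_nat
        (Real.exp (‖A‖ + ‖B‖) *
          (Real.exp (‖A‖ + ‖B‖) + 1 + (‖A‖ + ‖B‖) * Real.exp (‖A‖ + ‖B‖) +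
            Real.exp (‖A‖ + ‖B‖) ^ 2 + Real.exp (‖A‖ + ‖B‖)) * (‖A‖ + ‖B‖) ^ 2))
    filter_upwards [Filter.eventually_ge_atTop 1] with m hm
    exact my_trotter_bound A B m hm
end

section
/- Let d ≥ 1, let L_1, …, L_d be D×D complex matrices with ‖L_j‖ ≤ 2 for every j, let p_1, …, p_d be nonnegative reals with Σ_j p_j = 1, let λ ≥ 0 and t ≥ 0 be reals, and set L := λ · Σ_j p_j L_j. Then ‖Σ_j p_j · exp(λ t L_j) − exp(t L)‖ ≤ 2 · Σ_{n=2}^{∞} (2λt)ⁿ/n!. -/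
open scoped Matrix.Norms.L2Operator

set_option maxHeartbeats 1000000 in
lemma exp_remainder_bound {D : ℕ} (x : Matrix (Fin D) (Fin D) ℂ) (c : ℝ) (hx : ‖x‖ ≤ c) :
    ‖NormedSpace.exp x - 1 - x‖ ≤ ∑' n : ℕ, c ^ (n + 2) / (Nat.factorial (n + 2)) := by
  have hc : 0 ≤ c := le_trans (norm_nonneg x) hx
  have hsum : Summable (fun n : ℕ => ((n.factorial : ℂ)⁻¹) • x ^ n) :=
    NormedSpace.expSeries_summable' (𝕂 := ℂ) x
  have h2 := Summable.sum_add_tsum_nat_add 2 hsum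
  have hexp : NormedSpace.exp x = ∑' n : ℕ, ((n.factorial : ℂ)⁻¹) • x ^ n :=
    congrFun (NormedSpace.exp_eq_tsum ℂ) x
  have hrw : NormedSpace.exp x - 1 - x
      = ∑' n : ℕ, ((n + 2).factorial : ℂ)⁻¹ • x ^ (n + 2) := by
    rw [hexp, ← h2]
    simp [Finset.sum_range_succ]
    abel
  rw [hrw]
  have hb : ∀ n : ℕ, ‖((n + 2).factorial : ℂ)⁻¹ • x ^ (n + 2)‖ ≤ c ^ (n + 2) / ((n + 2).factorial) := by
    intro n
    rw [norm_smul, norm_inv, Complex.norm_natCast, div_eq_inv_mul]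
    gcongr
    · calc ‖x ^ (n + 2)‖ ≤ ‖x‖ ^ (n + 2) := norm_pow_le' x (by omega)
        _ ≤ c ^ (n + 2) := by gcongr
  have hsum2 : Summable (fun n : ℕ => c ^ (n + 2) / ((n + 2).factorial : ℝ)) :=
    (summable_nat_add_iff 2).2 (Real.summable_pow_div_factorial c)
  calc ‖∑' n : ℕ, ((n + 2).factorial : ℂ)⁻¹ • x ^ (n + 2)‖
      ≤ ∑' n : ℕ, ‖((n + 2).factorial : ℂ)⁻¹ • x ^ (n + 2)‖ :=
        norm_tsum_le_tsum_norm (hsum2.of_nonneg_of_le (fun n => norm_nonneg _) hb)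
    _ ≤ ∑' n : ℕ, c ^ (n + 2) / ((n + 2).factorial) :=
        Summable.tsum_le_tsum hb (hsum2.of_nonneg_of_le (fun n => norm_nonneg _) hb) hsum2


set_option maxHeartbeats 1000000 in
/-- **QDrift single-step error bound.**
Let `d ≥ 1`, let `L 0, …, L (d-1)` be `D × D` complex matrices of ℓ² operator norm at
most `2`, let `p` be a probability distribution on the indices, let `lam ≥ 0` and
`t ≥ 0` be reals, and set `Lsum := lam • Σ_j p j • L j`.  Then
`‖Σ_j p j • exp (lam * t • L j) - exp (t • Lsum)‖ ≤ 2 * Σ_{n=2}^∞ (2 lam t)ⁿ / n!`. -/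
theorem qdrift_single_step_bound {D d : ℕ} (hd : 1 ≤ d)
    (L : Fin d → Matrix (Fin D) (Fin D) ℂ) (hL : ∀ j, ‖L j‖ ≤ 2)
    (p : Fin d → ℝ) (hp : ∀ j, 0 ≤ p j) (hpsum : ∑ j, p j = 1)
    (lam t : ℝ) (hlam : 0 ≤ lam) (ht : 0 ≤ t) :
    ‖(∑ j, p j • NormedSpace.exp ((lam * t) • L j)) -
        NormedSpace.exp (t • (lam • ∑ j, p j • L j))‖ ≤
      2 * ∑' n : ℕ, (2 * lam * t) ^ (n + 2) / (Nat.factorial (n + 2)) := by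
  set M := ∑ j, p j • L j with hM
  have hMnorm : ‖M‖ ≤ 2 := by
    calc ‖M‖ ≤ ∑ j, ‖p j • L j‖ := norm_sum_le _ _
      _ ≤ ∑ j, p j * 2 := by
          refine Finset.sum_le_sum fun j _ => ?_
          rw [norm_smul, Real.norm_eq_abs, abs_of_nonneg (hp j)]
          exact mul_le_mul_of_nonneg_left (hL j) (hp j)
      _ = 2 := by rw [← Finset.sum_mul, hpsum, one_mul]
  have hts : t • (lam • M) = (lam * t) • M := by
    rw [smul_smul, mul_comm]
  set c := 2 * lam * t with hc
  have hc0 : 0 ≤ c := by positivity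
  set R := ∑' n : ℕ, c ^ (n + 2) / (Nat.factorial (n + 2)) with hR
  have hR0 : 0 ≤ R := tsum_nonneg fun n => by positivity
  have hlt : 0 ≤ lam * t := by positivity
  have hAj : ∀ j, ‖(lam * t) • L j‖ ≤ c := fun j => by
    rw [norm_smul, Real.norm_eq_abs, abs_of_nonneg hlt, hc]
    calc (lam * t) * ‖L j‖ ≤ (lam * t) * 2 := by gcongr; exact hL j
      _ = 2 * lam * t := by ring
  have hB : ‖(lam * t) • M‖ ≤ c := by
    rw [norm_smul, Real.norm_eq_abs, abs_of_nonneg hlt, hc]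
    calc (lam * t) * ‖M‖ ≤ (lam * t) * 2 := by gcongr
      _ = 2 * lam * t := by ring
  have key : (∑ j, p j • NormedSpace.exp ((lam * t) • L j)) -
        NormedSpace.exp (t • (lam • M))
      = (∑ j, p j • (NormedSpace.exp ((lam * t) • L j) - 1 - (lam * t) • L j))
        - (NormedSpace.exp ((lam * t) • M) - 1 - (lam * t) • M) := by
    rw [hts]
    have h1 : ∑ j, p j • (1 : Matrix (Fin D) (Fin D) ℂ) = 1 := by
      rw [← Finset.sum_smul, hpsum, one_smul]
    have h2 : ∑ j, p j • ((lam * t) • L j) = (lam * t) • M := by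
      rw [hM, Finset.smul_sum]
      exact Finset.sum_congr rfl fun j _ => smul_comm _ _ _
    simp only [smul_sub, Finset.sum_sub_distrib, h1, h2]
    abel
  rw [key]
  calc ‖(∑ j, p j • (NormedSpace.exp ((lam * t) • L j) - 1 - (lam * t) • L j))
        - (NormedSpace.exp ((lam * t) • M) - 1 - (lam * t) • M)‖
      ≤ ‖∑ j, p j • (NormedSpace.exp ((lam * t) • L j) - 1 - (lam * t) • L j)‖
        + ‖NormedSpace.exp ((lam * t) • M) - 1 - (lam * t) • M‖ := norm_sub_le _ _
    _ ≤ (∑ j, p j * R) + R := by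
        gcongr ?_ + ?_
        · calc ‖∑ j, p j • (NormedSpace.exp ((lam * t) • L j) - 1 - (lam * t) • L j)‖
              ≤ ∑ j, ‖p j • (NormedSpace.exp ((lam * t) • L j) - 1 - (lam * t) • L j)‖ :=
                norm_sum_le _ _
            _ ≤ ∑ j, p j * R := by
                refine Finset.sum_le_sum fun j _ => ?_
                rw [norm_smul, Real.norm_eq_abs, abs_of_nonneg (hp j)]
                exact mul_le_mul_of_nonneg_left
                  (exp_remainder_bound ((lam * t) • L j) c (hAj j)) (hp j)
        · exact exp_remainder_bound ((lam * t) • M) c hB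
    _ = 2 * R := by rw [← Finset.sum_mul, hpsum, one_mul]; ring
end

section
/- Fix n ≥ 1. For each j with 0 ≤ j < n, define the 2ⁿ×2ⁿ complex matrix c_j as the Kronecker product Z ⊗ ⋯ ⊗ Z ⊗ a ⊗ I ⊗ ⋯ ⊗ I, with j copies of Z, one copy of a in position j, and n−1−j copies of the identity I. Then for all j, k < n: (1) c_j·c_k + c_k·c_j = 0, and (2) c_j·c_k^† + c_k^†·c_j equals the identity matrix if j = k, and equals 0 otherwise, where † denotes conjugate transpose. -/
open scoped Matrix

/-- The `2 × 2` annihilation matrix `a = [[0,1],[0,0]]`. -/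
noncomputable def annMat : Matrix (Fin 2) (Fin 2) ℂ := !![0, 1; 0, 0]
/-- The Pauli `Z` matrix `[[1,0],[0,-1]]`. -/
noncomputable def zMat : Matrix (Fin 2) (Fin 2) ℂ := !![1, 0; 0, -1]

/-- The Jordan–Wigner transformed annihilation operator on `n` sites:
`c_j = Z ⊗ ⋯ ⊗ Z ⊗ a ⊗ I ⊗ ⋯ ⊗ I`, with `j` copies of `Z`, one copy of `a` in
position `j`, and `n - 1 - j` copies of the `2 × 2` identity, realized as a
`2ⁿ × 2ⁿ` complex matrix indexed by `n`-bit strings via the entrywise description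
of the Kronecker product. -/
noncomputable def jordanWigner {n : ℕ} (j : Fin n) :
    Matrix (Fin n → Fin 2) (Fin n → Fin 2) ℂ :=
  Matrix.of fun x y =>
    ∏ k : Fin n, (if (k : ℕ) < (j : ℕ) then zMat else if k = j then annMat else 1) (x k) (y k)

namespace JWAux

open Matrix Finset

noncomputable def fac {n : ℕ} (M : Fin n → Matrix (Fin 2) (Fin 2) ℂ) :
    Matrix (Fin n → Fin 2) (Fin n → Fin 2) ℂ :=
  Matrix.of fun x y => ∏ i, M i (x i) (y i)

lemma fac_mul {n : ℕ} (M N : Fin n → Matrix (Fin 2) (Fin 2) ℂ) :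
    fac M * fac N = fac fun i => M i * N i := by
  ext x y
  simp only [fac, Matrix.mul_apply, Matrix.of_apply]
  calc
    ∑ z : Fin n → Fin 2, (∏ i, M i (x i) (z i)) * ∏ i, N i (z i) (y i)
        = ∑ z ∈ Fintype.piFinset (fun _ : Fin n => (Finset.univ : Finset (Fin 2))),
            ∏ i, M i (x i) (z i) * N i (z i) (y i) := by
          rw [Fintype.piFinset_univ]
          exact Finset.sum_congr rfl fun z _ => (Finset.prod_mul_distrib).symm
    _ = ∏ i, ∑ b : Fin 2, M i (x i) b * N i b (y i) :=
          (Finset.prod_univ_sum (fun _ : Fin n => (Finset.univ : Finset (Fin 2)))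
            (fun i b => M i (x i) b * N i b (y i))).symm
    _ = ∏ i, (M i * N i) (x i) (y i) := by
          simp [Matrix.mul_apply]

lemma fac_conjTranspose {n : ℕ} (M : Fin n → Matrix (Fin 2) (Fin 2) ℂ) :
    (fac M)ᴴ = fac fun i => (M i)ᴴ := by
  ext x y
  simp [fac, Matrix.conjTranspose_apply, map_prod]

lemma fac_one {n : ℕ} : fac (fun _ : Fin n => (1 : Matrix (Fin 2) (Fin 2) ℂ)) = 1 := by
  ext x y
  simp only [fac, Matrix.of_apply, Matrix.one_apply]
  by_cases h : x = y
  · subst h; simp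
  · rw [if_neg h]
    obtain ⟨i, hi⟩ := Function.ne_iff.mp h
    exact Finset.prod_eq_zero (Finset.mem_univ i) (if_neg hi)

lemma jordanWigner_eq_fac {n : ℕ} (j : Fin n) :
    jordanWigner j = fac fun i =>
      if (i : ℕ) < (j : ℕ) then zMat else if i = j then annMat else 1 := rfl

lemma fac_anticomm {n : ℕ} (M N : Fin n → Matrix (Fin 2) (Fin 2) ℂ) (t : Fin n)
    (h1 : M t * N t = -(N t * M t))
    (h2 : ∀ i, i ≠ t → M i * N i = N i * M i) :
    fac M * fac N + fac N * fac M = 0 := by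
  rw [fac_mul, fac_mul]
  ext x y
  simp only [fac, Matrix.add_apply, Matrix.of_apply, Matrix.zero_apply]
  have e1 : ∏ i ∈ Finset.univ.erase t, (M i * N i) (x i) (y i)
      = ∏ i ∈ Finset.univ.erase t, (N i * M i) (x i) (y i) :=
    Finset.prod_congr rfl fun i hi => by rw [h2 i (Finset.ne_of_mem_erase hi)]
  rw [← Finset.mul_prod_erase Finset.univ _ (Finset.mem_univ t),
      ← Finset.mul_prod_erase Finset.univ (fun i => (N i * M i) (x i) (y i)) (Finset.mem_univ t),
      e1, h1]
  simp only [Matrix.neg_apply]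
  ring

lemma fac_add {n : ℕ} (M N P : Fin n → Matrix (Fin 2) (Fin 2) ℂ) (t : Fin n)
    (h1 : M t + N t = P t)
    (h2 : ∀ i, i ≠ t → M i = P i ∧ N i = P i) :
    fac M + fac N = fac P := by
  ext x y
  simp only [fac, Matrix.add_apply, Matrix.of_apply]
  have e1 : ∏ i ∈ Finset.univ.erase t, M i (x i) (y i)
      = ∏ i ∈ Finset.univ.erase t, P i (x i) (y i) :=
    Finset.prod_congr rfl fun i hi => by rw [(h2 i (Finset.ne_of_mem_erase hi)).1]
  have e2 : ∏ i ∈ Finset.univ.erase t, N i (x i) (y i)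
      = ∏ i ∈ Finset.univ.erase t, P i (x i) (y i) :=
    Finset.prod_congr rfl fun i hi => by rw [(h2 i (Finset.ne_of_mem_erase hi)).2]
  rw [← Finset.mul_prod_erase Finset.univ _ (Finset.mem_univ t),
      ← Finset.mul_prod_erase Finset.univ (fun i => N i (x i) (y i)) (Finset.mem_univ t),
      ← Finset.mul_prod_erase Finset.univ (fun i => P i (x i) (y i)) (Finset.mem_univ t),
      e1, e2, ← add_mul, ← Matrix.add_apply, h1]

lemma fac_zero {n : ℕ} (M : Fin n → Matrix (Fin 2) (Fin 2) ℂ) (t : Fin n)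
    (h : M t = 0) : fac M = 0 := by
  ext x y
  simp only [fac, Matrix.of_apply, Matrix.zero_apply]
  exact Finset.prod_eq_zero (Finset.mem_univ t) (by simp [h])

-- 2×2 computations
lemma annT : annMatᴴ = !![0, 0; 1, 0] := by
  ext i j; fin_cases i <;> fin_cases j <;> simp [annMat]

lemma ann_mul_ann : annMat * annMat = 0 := by
  ext i j; fin_cases i <;> fin_cases j <;>
    simp [annMat, Matrix.mul_apply, Fin.sum_univ_two]

lemma ann_mul_z : annMat * zMat = -(zMat * annMat) := by
  ext i j; fin_cases i <;> fin_cases j <;>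
    simp [annMat, zMat, Matrix.mul_apply, Fin.sum_univ_two]

lemma z_conjT : zMatᴴ = zMat := by
  ext i j; fin_cases i <;> fin_cases j <;> simp [zMat]

lemma z_mul_z : zMat * zMat = 1 := by
  ext i j; fin_cases i <;> fin_cases j <;>
    simp [zMat, Matrix.mul_apply, Fin.sum_univ_two, Matrix.one_apply]

lemma ann_car : annMat * annMatᴴ + annMatᴴ * annMat = 1 := by
  rw [annT]
  ext i j; fin_cases i <;> fin_cases j <;>
    simp [annMat, Matrix.mul_apply, Fin.sum_univ_two, Matrix.one_apply]

lemma ann_mul_zT : annMat * zMatᴴ = -(zMatᴴ * annMat) := by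
  rw [z_conjT]; exact ann_mul_z

lemma z_mul_annT : zMat * annMatᴴ = -(annMatᴴ * zMat) := by
  rw [annT]
  ext i j; fin_cases i <;> fin_cases j <;>
    simp [zMat, Matrix.mul_apply, Fin.sum_univ_two]

end JWAux

open JWAux

/-- **Canonical anticommutation relations for the Jordan–Wigner operators.**
For `n ≥ 1` and all `j k : Fin n`:
(1) `c_j c_k + c_k c_j = 0`, and
(2) `c_j c_k† + c_k† c_j = 1` if `j = k` and `0` otherwise. -/
theorem jordanWigner_car {n : ℕ} (hn : 1 ≤ n) (j k : Fin n) :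
    jordanWigner j * jordanWigner k + jordanWigner k * jordanWigner j = 0 ∧
      jordanWigner j * (jordanWigner k)ᴴ + (jordanWigner k)ᴴ * jordanWigner j =
        if j = k then 1 else 0 := by
  classical
  rw [jordanWigner_eq_fac j, jordanWigner_eq_fac k]
  set M : Fin n → Matrix (Fin 2) (Fin 2) ℂ :=
    fun i => if (i : ℕ) < (j : ℕ) then zMat else if i = j then annMat else 1 with hM
  set N : Fin n → Matrix (Fin 2) (Fin 2) ℂ :=
    fun i => if (i : ℕ) < (k : ℕ) then zMat else if i = k then annMat else 1 with hN
  have hMj : M j = annMat := by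
    show (if (j : ℕ) < (j : ℕ) then zMat else if j = j then annMat else 1) = annMat
    rw [if_neg (lt_irrefl _), if_pos rfl]
  have hNk : N k = annMat := by
    show (if (k : ℕ) < (k : ℕ) then zMat else if k = k then annMat else 1) = annMat
    rw [if_neg (lt_irrefl _), if_pos rfl]
  have hMlt : ∀ i : Fin n, (i : ℕ) < (j : ℕ) → M i = zMat := by
    intro i hi
    show (if (i : ℕ) < (j : ℕ) then zMat else if i = j then annMat else 1) = zMat
    rw [if_pos hi]
  have hNlt : ∀ i : Fin n, (i : ℕ) < (k : ℕ) → N i = zMat := by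
    intro i hi
    show (if (i : ℕ) < (k : ℕ) then zMat else if i = k then annMat else 1) = zMat
    rw [if_pos hi]
  have hMgt : ∀ i : Fin n, (j : ℕ) < (i : ℕ) → M i = 1 := by
    intro i hi
    have h1 : ¬ (i : ℕ) < (j : ℕ) := by omega
    have h2 : i ≠ j := by intro h; subst h; omega
    show (if (i : ℕ) < (j : ℕ) then zMat else if i = j then annMat else 1) = 1
    rw [if_neg h1, if_neg h2]
  have hNgt : ∀ i : Fin n, (k : ℕ) < (i : ℕ) → N i = 1 := by
    intro i hi
    have h1 : ¬ (i : ℕ) < (k : ℕ) := by omega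
    have h2 : i ≠ k := by intro h; subst h; omega
    show (if (i : ℕ) < (k : ℕ) then zMat else if i = k then annMat else 1) = 1
    rw [if_neg h1, if_neg h2]
  constructor
  · rcases lt_trichotomy (j : ℕ) (k : ℕ) with h | h | h
    · refine fac_anticomm M N j ?_ ?_
      · rw [hMj, hNlt j h, ann_mul_z]
      · intro i hi
        have hij : (i : ℕ) ≠ (j : ℕ) := fun hc => hi (Fin.ext hc)
        rcases lt_or_gt_of_ne hij with hlt | hgt
        · rw [hMlt i hlt, hNlt i (by omega)]
        · rw [hMgt i hgt, one_mul, mul_one]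
    · have hjk : j = k := Fin.ext h
      subst hjk
      rw [fac_mul]
      have hz1 : (fun i => M i * N i) j = 0 := by
        show M j * N j = 0; rw [hMj, hNk, ann_mul_ann]
      rw [fac_zero _ j hz1]
      simp
    · refine fac_anticomm M N k ?_ ?_
      · rw [hNk, hMlt k h, ann_mul_z, neg_neg]
      · intro i hi
        have hik : (i : ℕ) ≠ (k : ℕ) := fun hc => hi (Fin.ext hc)
        rcases lt_or_gt_of_ne hik with hlt | hgt
        · rw [hNlt i hlt, hMlt i (by omega)]
        · rw [hNgt i hgt, one_mul, mul_one]
  · rw [fac_conjTranspose]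
    by_cases hjk : j = k
    · subst hjk
      rw [if_pos rfl, fac_mul, fac_mul, ← fac_one]
      refine fac_add _ _ _ j ?_ ?_
      · show M j * (N j)ᴴ + (N j)ᴴ * M j = 1
        rw [hMj, hNk]; exact ann_car
      · intro i hi
        have hij : (i : ℕ) ≠ (j : ℕ) := fun hc => hi (Fin.ext hc)
        rcases lt_or_gt_of_ne hij with hlt | hgt
        · constructor
          · show M i * (N i)ᴴ = 1
            rw [hMlt i hlt, hNlt i hlt, z_conjT, z_mul_z]
          · show (N i)ᴴ * M i = 1
            rw [hMlt i hlt, hNlt i hlt, z_conjT, z_mul_z]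
        · constructor
          · show M i * (N i)ᴴ = 1
            rw [hMgt i hgt, hNgt i hgt, Matrix.conjTranspose_one, one_mul]
          · show (N i)ᴴ * M i = 1
            rw [hMgt i hgt, hNgt i hgt, Matrix.conjTranspose_one, one_mul]
    · rw [if_neg hjk]
      have hjk' : (j : ℕ) ≠ (k : ℕ) := fun hc => hjk (Fin.ext hc)
      rcases lt_or_gt_of_ne hjk' with h | h
      · refine fac_anticomm M (fun i => (N i)ᴴ) j ?_ ?_
        · show M j * (N j)ᴴ = -((N j)ᴴ * M j)
          rw [hMj, hNlt j h, ann_mul_zT]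
        · intro i hi
          have hij : (i : ℕ) ≠ (j : ℕ) := fun hc => hi (Fin.ext hc)
          rcases lt_or_gt_of_ne hij with hlt | hgt
          · show M i * (N i)ᴴ = (N i)ᴴ * M i
            rw [hMlt i hlt, hNlt i (by omega), z_conjT]
          · show M i * (N i)ᴴ = (N i)ᴴ * M i
            rw [hMgt i hgt, one_mul, mul_one]
      · refine fac_anticomm M (fun i => (N i)ᴴ) k ?_ ?_
        · show M k * (N k)ᴴ = -((N k)ᴴ * M k)
          rw [hNk, hMlt k h, z_mul_annT]
        · intro i hi
          have hik : (i : ℕ) ≠ (k : ℕ) := fun hc => hi (Fin.ext hc)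
          rcases lt_or_gt_of_ne hik with hlt | hgt
          · show M i * (N i)ᴴ = (N i)ᴴ * M i
            rw [hNlt i hlt, hMlt i (by omega), z_conjT]
          · show M i * (N i)ᴴ = (N i)ᴴ * M i
            rw [hNgt i hgt, Matrix.conjTranspose_one, one_mul, mul_one]
end

section
/- Let θ be a real number and let S = [[1,0],[0,i]] be the phase gate. Then exp(−i θ • (X ⊗ X ⊗ Y ⊗ Y)) = (I ⊗ I ⊗ S ⊗ S) · exp(−i θ • (X ⊗ X ⊗ X ⊗ X)) · (I ⊗ I ⊗ S^† ⊗ S^†), where ⊗ is the Kronecker product, I the 2×2 identity, and † the conjugate transpose. -/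
open scoped Matrix Kronecker

set_option maxRecDepth 20000


private lemma conj_exp_aux {n : Type*} [Fintype n] [DecidableEq n]
    (V W A B : Matrix n n ℂ) (hVW : V * W = 1) (h : V * A * W = B) :
    NormedSpace.exp B = V * NormedSpace.exp A * W := by
  have hUnit : IsUnit V := (Matrix.isUnit_iff_isUnit_det V).mpr
    (Matrix.isUnit_det_of_right_inverse hVW)
  have hVinv : V⁻¹ = W := Matrix.inv_eq_right_inv hVW
  rw [← h, ← hVinv, Matrix.exp_conj V A hUnit]

/-- **Correctness of the synthesized circuit for the Pauli string `XXYY`.**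
With `S = [[1,0],[0,i]]` the phase gate, conjugating the `XXXX` simulation by `S`
gates on the last two qubits implements `exp (-i θ (X ⊗ X ⊗ Y ⊗ Y))`:
`exp (-i θ (X⊗X⊗Y⊗Y)) = (I⊗I⊗S⊗S) * exp (-i θ (X⊗X⊗X⊗X)) * (I⊗I⊗S†⊗S†)`. -/
theorem xxyy_circuit_correct (θ : ℝ)
    (X Y I S : Matrix (Fin 2) (Fin 2) ℂ)
    (hX : X = !![0, 1; 1, 0]) (hY : Y = !![0, -Complex.I; Complex.I, 0])
    (hI : I = !![1, 0; 0, 1]) (hS : S = !![1, 0; 0, Complex.I]) :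
    NormedSpace.exp ((-(Complex.I * θ)) • (((X ⊗ₖ X) ⊗ₖ Y) ⊗ₖ Y)) =
      (((I ⊗ₖ I) ⊗ₖ S) ⊗ₖ S) *
        NormedSpace.exp ((-(Complex.I * θ)) • (((X ⊗ₖ X) ⊗ₖ X) ⊗ₖ X)) *
        (((I ⊗ₖ I) ⊗ₖ Sᴴ) ⊗ₖ Sᴴ) := by
  have hI1 : I = (1 : Matrix (Fin 2) (Fin 2) ℂ) := by
    rw [hI]; ext i j; fin_cases i <;> fin_cases j <;> simp [Matrix.one_apply]
  have hSSh : S * Sᴴ = 1 := by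
    subst hS
    ext i j; fin_cases i <;> fin_cases j <;>
      simp [Matrix.mul_apply, Fin.sum_univ_succ, Matrix.one_apply, Complex.ext_iff]
  have hSXSh : S * X * Sᴴ = Y := by
    subst hS hX hY
    ext i j; fin_cases i <;> fin_cases j <;>
      simp [Matrix.mul_apply, Fin.sum_univ_succ, Complex.ext_iff]
  set V := (((I ⊗ₖ I) ⊗ₖ S) ⊗ₖ S) with hV
  set W := (((I ⊗ₖ I) ⊗ₖ Sᴴ) ⊗ₖ Sᴴ) with hW
  have hVW : V * W = 1 := by
    rw [hV, hW, ← Matrix.mul_kronecker_mul, ← Matrix.mul_kronecker_mul,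
      ← Matrix.mul_kronecker_mul, hSSh, hI1]
    simp [Matrix.one_kronecker_one]
  have hconj : V * ((-(Complex.I * θ)) • (((X ⊗ₖ X) ⊗ₖ X) ⊗ₖ X)) * W
      = (-(Complex.I * θ)) • (((X ⊗ₖ X) ⊗ₖ Y) ⊗ₖ Y) := by
    rw [Matrix.mul_smul, Matrix.smul_mul]
    congr 1
    rw [hV, hW, ← Matrix.mul_kronecker_mul, ← Matrix.mul_kronecker_mul,
      ← Matrix.mul_kronecker_mul, ← Matrix.mul_kronecker_mul, ← Matrix.mul_kronecker_mul,
      ← Matrix.mul_kronecker_mul, hSXSh, hI1]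
    simp
  exact conj_exp_aux V W _ _ hVW hconj
end

section
/- Let ψ be the complex column 2-vector with entries (−sin(π/8), cos(π/8)) and let ψψ^† denote the 2×2 matrix whose (j,k) entry is ψ_j · conj(ψ_k). Then exp(−i π • (ψψ^†)) = (1/√2)·[[1,1],[1,−1]], the Hadamard matrix. -/
open Matrix NormedSpace

lemma hadamard_key (s c : ℂ) (h : s ^ 2 + c ^ 2 = 1) :
    exp ((-(Complex.I * Real.pi)) • !![s^2, -(s*c); -(s*c), c^2]) =
      !![c^2 - s^2, 2*s*c; 2*s*c, s^2 - c^2] := by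
  have hUU : (!![-s, c; c, s] : Matrix (Fin 2) (Fin 2) ℂ) * !![-s, c; c, s] = 1 := by
    ext i j
    fin_cases i <;> fin_cases j <;>
      simp [Matrix.mul_apply, Fin.sum_univ_two, Matrix.one_apply] <;>
      first | linear_combination h | linear_combination (0:ℂ)*h
  have hUinv : (!![-s, c; c, s] : Matrix (Fin 2) (Fin 2) ℂ)⁻¹ = !![-s, c; c, s] :=
    Matrix.inv_eq_right_inv hUU
  have hUnit : IsUnit (!![-s, c; c, s] : Matrix (Fin 2) (Fin 2) ℂ) :=
    ⟨⟨_, _, hUU, hUU⟩, rfl⟩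
  have hD : Matrix.diagonal ![-(Complex.I * (Real.pi : ℂ)), (0 : ℂ)]
      = !![-(Complex.I * (Real.pi : ℂ)), 0; 0, 0] := by
    ext i j
    fin_cases i <;> fin_cases j <;> simp
  have hrw : (-(Complex.I * Real.pi)) • !![s^2, -(s*c); -(s*c), c^2]
      = !![-s, c; c, s] * Matrix.diagonal ![-(Complex.I * (Real.pi : ℂ)), (0 : ℂ)]
          * (!![-s, c; c, s] : Matrix (Fin 2) (Fin 2) ℂ)⁻¹ := by
    rw [hUinv, hD]
    ext i j
    fin_cases i <;> fin_cases j <;>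
      simp [Matrix.mul_apply, Fin.sum_univ_two] <;> ring
  have hconj := Matrix.exp_conj (!![-s, c; c, s] : Matrix (Fin 2) (Fin 2) ℂ)
    (Matrix.diagonal ![-(Complex.I * (Real.pi : ℂ)), (0 : ℂ)]) hUnit
  have hdiag := Matrix.exp_diagonal ![-(Complex.I * (Real.pi : ℂ)), (0 : ℂ)]
  have h0 : exp (-(Complex.I * (Real.pi : ℂ))) = -1 := by
    rw [← Complex.exp_eq_exp_ℂ,
      show -(Complex.I * (Real.pi : ℂ)) = -((Real.pi : ℂ) * Complex.I) by ring,
      Complex.exp_neg, Complex.exp_pi_mul_I]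
    norm_num
  have hexp : exp ![-(Complex.I * (Real.pi : ℂ)), (0 : ℂ)] = ![-1, 1] := by
    funext i
    rw [Pi.coe_exp]
    fin_cases i <;> simp [h0, exp_zero]
  have hD2 : Matrix.diagonal ![(-1 : ℂ), 1] = !![(-1 : ℂ), 0; 0, 1] := by
    ext i j
    fin_cases i <;> fin_cases j <;> simp
  rw [hrw, hconj, hdiag, hexp, hUinv, hD2]
  ext i j
  fin_cases i <;> fin_cases j <;>
    simp [Matrix.mul_apply, Fin.sum_univ_two] <;> ring

/-- **Hadamard gate as a Hamiltonian simulation.**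
Let `ψ = (-sin (π/8), cos (π/8))` be the eigenvector of the Hadamard matrix and
`ψψ† ` its rank-one outer product.  Then simulating the Hamiltonian `ψψ†` for time
`π` gives the Hadamard gate: `exp (-i π (ψψ†)) = (1/√2) [[1,1],[1,-1]]`. -/
theorem hadamard_gate_synthesis
    (ψ : Fin 2 → ℂ)
    (hψ : ψ = ![-(Real.sin (Real.pi / 8) : ℂ), (Real.cos (Real.pi / 8) : ℂ)]) :
    NormedSpace.exp
        ((-(Complex.I * Real.pi)) •
          (Matrix.of fun j k : Fin 2 => ψ j * (starRingEnd ℂ) (ψ k))) =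
      ((Real.sqrt 2 : ℂ))⁻¹ • !![1, 1; 1, -1] := by
  subst hψ
  have hsq : (Real.sqrt 2)⁻¹ = Real.sqrt 2 / 2 := by
    rw [inv_eq_one_div, div_eq_div_iff (by positivity) (by norm_num), one_mul,
      Real.mul_self_sqrt (by norm_num)]
  have e0 : Real.sin (Real.pi / 8) ^ 2 + Real.cos (Real.pi / 8) ^ 2 = 1 :=
    Real.sin_sq_add_cos_sq _
  have e1 : Real.cos (Real.pi / 8) ^ 2 - Real.sin (Real.pi / 8) ^ 2 = (Real.sqrt 2)⁻¹ := by
    rw [← Real.cos_two_mul', show 2 * (Real.pi / 8) = Real.pi / 4 by ring,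
      Real.cos_pi_div_four, hsq]
  have e2 : 2 * Real.sin (Real.pi / 8) * Real.cos (Real.pi / 8) = (Real.sqrt 2)⁻¹ := by
    rw [← Real.sin_two_mul, show 2 * (Real.pi / 8) = Real.pi / 4 by ring,
      Real.sin_pi_div_four, hsq]
  generalize hA : Real.sin (Real.pi / 8) = a at e0 e1 e2 ⊢
  generalize hB : Real.cos (Real.pi / 8) = b at e0 e1 e2 ⊢
  have hM : (Matrix.of fun j k : Fin 2 => ![-(a:ℂ), (b:ℂ)] j * (starRingEnd ℂ) (![-(a:ℂ), (b:ℂ)] k))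
      = !![(a:ℂ)^2, -((a:ℂ)*(b:ℂ)); -((a:ℂ)*(b:ℂ)), (b:ℂ)^2] := by
    ext i j
    fin_cases i <;> fin_cases j <;>
      simp [Complex.conj_ofReal] <;> ring
  rw [hM, hadamard_key (a:ℂ) (b:ℂ) (by exact_mod_cast congrArg (Complex.ofReal) e0)]
  have c1 : (b:ℂ)^2 - (a:ℂ)^2 = ((Real.sqrt 2 : ℂ))⁻¹ := by
    exact_mod_cast congrArg Complex.ofReal e1
  have c2 : 2 * (a:ℂ) * (b:ℂ) = ((Real.sqrt 2 : ℂ))⁻¹ := by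
    exact_mod_cast congrArg Complex.ofReal e2
  ext i j
  fin_cases i <;> fin_cases j <;>
    simp [Matrix.smul_apply] <;>
    first
    | linear_combination c1
    | linear_combination -c1
    | linear_combination c2
end
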